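/- Define Σ_F recursively on strings s of length at most L by: Σ_F(s) = f(s) if ℓ(s) = L, and Σ_F(s) = f(s) + ∏_{k=0}^{m-1} Σ_F(ks) if ℓ(s) < L. Then Σ_F(λ) = ∑_{τ ∈ 𝒯_L} ∏_{s ∈ τ} f(s), where λ is the empty string. -/

import Mathlib

open Finset

/-- The finset of leaf sets of full rooted `m`-ary trees rooted at node `r`
(nodes identified with strings, children of `s` being `k :: s`) of depth at most `d`. -/
def trees (m : ℕ) : ℕ → List (Fin m) → Finset (Finset (List (Fin m)))
  | 0, r => {{r}}
  | (d + 1), r =>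
    insert {r}
      ((Fintype.piFinset (fun k : Fin m => trees m d (k :: r))).image
        (fun t => Finset.univ.biUnion (fun k => t k)))

/-- The recursively-defined sum functional `Σ_F`, with `d` the remaining depth
`L - ℓ(s)` below node `s`. -/
def SigmaF {m : ℕ} (f : List (Fin m) → ℝ) : ℕ → List (Fin m) → ℝ
  | 0, s => f s
  | (d + 1), s => f s + ∏ k : Fin m, SigmaF f d (k :: s)

lemma suffix_eq_of_length {α : Type*} {a b l : List α} (ha : a <:+ l) (hb : b <:+ l)
    (h : a.length = b.length) : a = b := by
  obtain ⟨u, hu⟩ := ha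
  obtain ⟨v, hv⟩ := hb
  have hl := hu.trans hv.symm
  have hlen : u.length = v.length := by
    have := congrArg List.length hl
    simp only [List.length_append] at this
    omega
  exact (List.append_inj hl hlen).2

lemma trees_suffix {m d : ℕ} {r : List (Fin m)} {τ : Finset (List (Fin m))}
    (hτ : τ ∈ trees m d r) {s : List (Fin m)} (hs : s ∈ τ) : r <:+ s := by
  induction d generalizing r τ with
  | zero =>
    simp only [trees, Finset.mem_singleton] at hτ
    subst hτ
    simp only [Finset.mem_singleton] at hs
    subst hs
    exact List.suffix_refl _
  | succ d ih =>
    simp only [trees, Finset.mem_insert, Finset.mem_image] at hτ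
    rcases hτ with h | ⟨t, ht, rfl⟩
    · subst h; simp only [Finset.mem_singleton] at hs; subst hs; exact List.suffix_refl _
    · simp only [Finset.mem_biUnion, Finset.mem_univ, true_and] at hs
      obtain ⟨k, hk⟩ := hs
      rw [Fintype.mem_piFinset] at ht
      exact (List.suffix_cons k r).trans (ih (ht k) hk)

lemma sigma_eq_sum_aux (m d : ℕ) (f : List (Fin m) → ℝ) (r : List (Fin m)) :
    SigmaF f d r = ∑ τ ∈ trees m d r, ∏ s ∈ τ, f s := by
  induction d generalizing r with
  | zero => simp [SigmaF, trees]
  | succ d ih =>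
    have key : ∀ (t : Fin m → Finset (List (Fin m))),
        t ∈ Fintype.piFinset (fun k : Fin m => trees m d (k :: r)) →
        ∀ k, ∀ s ∈ t k, (k :: r) <:+ s := by
      intro t ht k s hs
      rw [Fintype.mem_piFinset] at ht
      exact trees_suffix (ht k) hs
    rw [SigmaF, trees]
    have hnotmem : ({r} : Finset (List (Fin m))) ∉
        (Fintype.piFinset (fun k : Fin m => trees m d (k :: r))).image
        (fun t => Finset.univ.biUnion (fun k => t k)) := by
      simp only [Finset.mem_image, not_exists, not_and]
      intro t ht heq
      have : r ∈ Finset.univ.biUnion (fun k => t k) := heq.symm ▸ Finset.mem_singleton_self r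
      simp only [Finset.mem_biUnion, Finset.mem_univ, true_and] at this
      obtain ⟨k, hk⟩ := this
      have := (key t ht k r hk).length_le
      simp at this
    rw [Finset.sum_insert hnotmem, Finset.prod_singleton]
    congr 1
    rw [Finset.sum_image ?_]
    · simp only [ih]
      rw [Finset.prod_univ_sum]
      apply Finset.sum_congr rfl
      intro t ht
      rw [Finset.prod_biUnion ?_]
      intro k _ k' _ hkk'
      rw [Function.onFun, Finset.disjoint_left]
      intro s hs hs'
      have h1 := key t ht k s hs
      have h2 := key t ht k' s hs'
      have := suffix_eq_of_length h1 h2 rfl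
      exact hkk' (by simpa using this)
    · intro t ht t' ht' heq
      beta_reduce at heq
      funext k
      ext s
      constructor
      · intro hs
        have : s ∈ Finset.univ.biUnion (fun k => t' k) := by
          rw [← heq]
          exact Finset.mem_biUnion.2 ⟨k, Finset.mem_univ k, hs⟩
        simp only [Finset.mem_biUnion, Finset.mem_univ, true_and] at this
        obtain ⟨k', hk'⟩ := this
        have h1 := key t ht k s hs
        have h2 := key t' ht' k' s hk'
        have := suffix_eq_of_length h1 h2 rfl
        have : k = k' := by simpa using this
        exact this ▸ hk'
      · intro hs
        have : s ∈ Finset.univ.biUnion (fun k => t k) := by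
          rw [heq]
          exact Finset.mem_biUnion.2 ⟨k, Finset.mem_univ k, hs⟩
        simp only [Finset.mem_biUnion, Finset.mem_univ, true_and] at this
        obtain ⟨k', hk'⟩ := this
        have h1 := key t' ht' k s hs
        have h2 := key t ht k' s hk'
        have := suffix_eq_of_length h1 h2 rfl
        have : k = k' := by simpa using this
        exact this ▸ hk'

/-- `Σ_F(λ) = ∑_{τ ∈ 𝒯_L} ∏_{s ∈ τ} f(s)`. -/
theorem sigma_eq_sum_over_trees (m L : ℕ) (f : List (Fin m) → ℝ) :
    SigmaF f L ([] : List (Fin m)) =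
      ∑ τ ∈ trees m L ([] : List (Fin m)), ∏ s ∈ τ, f s := by
  exact sigma_eq_sum_aux m L f []
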